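/- Let n ≥ 2 and r > 0. Every function f holomorphic on the complement {z ∈ ℂⁿ : ‖z‖ > r} of the closed Euclidean ball of radius r extends to an entire function: there exists F holomorphic on all of ℂⁿ such that F(z) = f(z) for all z with ‖z‖ > r. -/

import Mathlib

open Set Metric
open Complex Function Topology

noncomputable section
namespace HartogsBall
variable {n : ℕ} [NeZero n]
abbrev Ec (n : ℕ) := EuclideanSpace ℂ (Fin n)

instance : MeasurableSpace (Ec n) := borel _
instance : BorelSpace (Ec n) := ⟨rfl⟩

/-- Replace the 0-th coordinate of `z` by `w`. -/
def upd (z : Ec n) (w : ℂ) : Ec n := z + (w - z 0) • EuclideanSpace.single 0 1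

lemma upd_apply (z : Ec n) (w : ℂ) (i : Fin n) :
    upd z w i = if i = 0 then w else z i := by
  by_cases h : i = 0
  · subst h; simp [upd, PiLp.add_apply, PiLp.smul_apply, EuclideanSpace.single_apply]
  · simp [upd, h, PiLp.add_apply, PiLp.smul_apply, EuclideanSpace.single_apply]

lemma upd_self (z : Ec n) : upd z (z 0) = z := by simp [upd]

lemma upd_upd (z : Ec n) (w w' : ℂ) : upd (upd z w) w' = upd z w' := by
  ext i
  by_cases h : i = 0 <;> simp [upd_apply, h]

lemma norm_coord_le (z : Ec n) (i : Fin n) : ‖z i‖ ≤ ‖z‖ := by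
  rw [EuclideanSpace.norm_eq]
  nth_rewrite 1 [show ‖z i‖ = Real.sqrt (‖z i‖ ^ 2) by rw [Real.sqrt_sq (norm_nonneg _)]]
  apply Real.sqrt_le_sqrt
  exact Finset.single_le_sum (f := fun j => ‖z j‖ ^ 2) (fun j _ => sq_nonneg _) (Finset.mem_univ i)

lemma norm_le_norm_upd (z : Ec n) (w : ℂ) : ‖w‖ ≤ ‖upd z w‖ := by
  have := norm_coord_le (upd z w) 0
  rwa [upd_apply, if_pos rfl] at this

lemma norm_upd_zero_le (z : Ec n) (w : ℂ) : ‖upd z 0‖ ≤ ‖upd z w‖ := by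
  rw [EuclideanSpace.norm_eq, EuclideanSpace.norm_eq]
  apply Real.sqrt_le_sqrt
  apply Finset.sum_le_sum
  intro j _
  by_cases h : j = 0
  · subst h; simp [upd_apply]
  · simp [upd_apply, h]


lemma one_lt_rank (hn : 2 ≤ n) : 1 < Module.rank ℝ (Ec n) := by
  have h1 : Module.finrank ℝ (Ec n) = 2 * n := by
    rw [show Module.finrank ℝ (Ec n)
        = Module.finrank ℝ ℂ * Module.finrank ℂ (Ec n) from
      (Module.finrank_mul_finrank ℝ ℂ (Ec n)).symm,
      Complex.finrank_real_complex, finrank_euclideanSpace_fin]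
  have h2 : 1 < Module.finrank ℝ (Ec n) := by omega
  rw [← Module.finrank_eq_rank]
  exact_mod_cast h2

lemma isPreconnected_norm_gt {E : Type*} [NormedAddCommGroup E] [NormedSpace ℝ E]
    (hrank : 1 < Module.rank ℝ E) {r : ℝ} (hr : 0 < r) :
    IsPreconnected {z : E | r < ‖z‖} := by
  have hsphere : IsPreconnected (sphere (0 : E) 1) :=
    isPreconnected_sphere hrank 0 1
  have hprod : IsPreconnected ((sphere (0 : E) 1) ×ˢ (Ioi r)) :=
    hsphere.prod isPreconnected_Ioi
  have himg : IsPreconnected ((fun p : E × ℝ => p.2 • p.1) ''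
      ((sphere (0 : E) 1) ×ˢ (Ioi r))) :=
    hprod.image _ (continuous_snd.smul continuous_fst).continuousOn
  convert himg using 1
  ext z
  simp only [mem_setOf_eq, mem_image, mem_prod, mem_sphere_zero_iff_norm, mem_Ioi, Prod.exists]
  constructor
  · intro hz
    have hz0 : ‖z‖ ≠ 0 := (hr.trans hz).ne'
    exact ⟨‖z‖⁻¹ • z, ‖z‖, ⟨by
      rw [norm_smul, norm_inv, norm_norm, inv_mul_cancel₀ hz0], hz⟩, by
      rw [smul_smul, mul_inv_cancel₀ hz0, one_smul]⟩
  · rintro ⟨c, t, ⟨hc, ht⟩, rfl⟩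
    rw [norm_smul, Real.norm_eq_abs, hc, mul_one]
    exact ht.trans_le (le_abs_self t)
end HartogsBall

namespace HartogsBall
variable {n : ℕ} [NeZero n]

def Lmap (n : ℕ) [NeZero n] : Ec n →L[ℂ] Ec n :=
  ContinuousLinearMap.id ℂ (Ec n) +
    (-(EuclideanSpace.proj 0 : Ec n →L[ℂ] ℂ)).smulRight (EuclideanSpace.single 0 1)

lemma hasFDerivAt_upd (w : ℂ) (z : Ec n) :
    HasFDerivAt (fun z : Ec n => upd z w) (Lmap n) z := by
  have hproj : HasFDerivAt (fun z : Ec n => z 0)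
      (EuclideanSpace.proj (0 : Fin n) : Ec n →L[ℂ] ℂ) z :=
    (EuclideanSpace.proj (0 : Fin n) : Ec n →L[ℂ] ℂ).hasFDerivAt
  have h1 : HasFDerivAt (fun z : Ec n => w - z 0)
      (-(EuclideanSpace.proj 0 : Ec n →L[ℂ] ℂ)) z := hproj.const_sub w
  exact (hasFDerivAt_id z).add (h1.smul_const (EuclideanSpace.single 0 1))

lemma continuous_upd : Continuous (fun p : Ec n × ℂ => upd p.1 p.2) := by
  apply continuous_fst.add
  exact (continuous_snd.sub ((EuclideanSpace.proj (0 : Fin n)).continuous.comp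
    continuous_fst)).smul continuous_const

variable {r : ℝ} {f : Ec n → ℂ}

lemma isOpen_S (r : ℝ) : IsOpen {z : Ec n | r < ‖z‖} :=
  isOpen_lt continuous_const continuous_norm

lemma upd_mem_S {w : ℂ} (hw : r < ‖w‖) (z : Ec n) : upd z w ∈ {z : Ec n | r < ‖z‖} :=
  lt_of_lt_of_le hw (norm_le_norm_upd z w)

def D (f : Ec n → ℂ) (w : ℂ) (z : Ec n) : Ec n →L[ℂ] ℂ :=
  (w - z 0)⁻¹ • ((fderiv ℂ f (upd z w)).comp (Lmap n)) +
    (((1 : ℂ →L[ℂ] ℂ).smulRight (-(((w - z 0) ^ 2)⁻¹))).comp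
      (-(EuclideanSpace.proj 0 : Ec n →L[ℂ] ℂ))).smulRight (f (upd z w))

lemma hasFDerivAt_integrand (hf : DifferentiableOn ℂ f {z : Ec n | r < ‖z‖})
    {w : ℂ} (hw : r < ‖w‖) {z : Ec n} (hz : z 0 ≠ w) :
    HasFDerivAt (fun z : Ec n => (w - z 0)⁻¹ • f (upd z w)) (D f w z) z := by
  have hproj : HasFDerivAt (fun z : Ec n => z 0)
      (EuclideanSpace.proj (0 : Fin n) : Ec n →L[ℂ] ℂ) z :=
    (EuclideanSpace.proj (0 : Fin n) : Ec n →L[ℂ] ℂ).hasFDerivAt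
  have h1 : HasFDerivAt (fun z : Ec n => w - z 0)
      (-(EuclideanSpace.proj 0 : Ec n →L[ℂ] ℂ)) z := hproj.const_sub w
  have h2 : HasFDerivAt (fun z : Ec n => (w - z 0)⁻¹)
      (((1 : ℂ →L[ℂ] ℂ).smulRight (-(((w - z 0) ^ 2)⁻¹))).comp
        (-(EuclideanSpace.proj 0 : Ec n →L[ℂ] ℂ))) z :=
    (hasFDerivAt_inv (sub_ne_zero.2 hz.symm)).comp z h1
  have hdf : DifferentiableAt ℂ f (upd z w) :=
    hf.differentiableAt ((isOpen_S r).mem_nhds (upd_mem_S hw z))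
  have h3 : HasFDerivAt (fun z : Ec n => f (upd z w))
      ((fderiv ℂ f (upd z w)).comp (Lmap n)) z :=
    hdf.hasFDerivAt.comp z (hasFDerivAt_upd w z)
  exact h2.smul h3

/-- The Cauchy-integral candidate extension, with circle radius `R`. -/
def cint (f : Ec n → ℂ) (R : ℝ) (z : Ec n) : ℂ :=
  (2 * Real.pi * Complex.I)⁻¹ • ∮ w in C(0, R), (w - z 0)⁻¹ • f (upd z w)

lemma diffAt_upd_w (z : Ec n) (w : ℂ) :
    DifferentiableAt ℂ (fun w => upd z w) w := by
  unfold upd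
  exact ((differentiableAt_fun_id.sub_const (z 0)).smul_const
    (EuclideanSpace.single 0 1)).const_add z

/-- Step A : agreement with `f` on the region where the slice is entire. -/
lemma cint_eq (hf : DifferentiableOn ℂ f {z : Ec n | r < ‖z‖})
    {R : ℝ} {z : Ec n} (hz : r < ‖upd z 0‖) (hz0 : ‖z 0‖ < R) :
    cint f R z = f z := by
  have hdiff : Differentiable ℂ (fun w => f (upd z w)) := by
    intro w
    have hmem : upd z w ∈ {z : Ec n | r < ‖z‖} :=
      lt_of_lt_of_le hz (norm_upd_zero_le z w)
    exact (hf.differentiableAt ((isOpen_S r).mem_nhds hmem)).comp w (diffAt_upd_w z w)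
  have hcl : DiffContOnCl ℂ (fun w => f (upd z w)) (ball (0 : ℂ) R) :=
    hdiff.diffContOnCl
  have hmem : z 0 ∈ ball (0 : ℂ) R := by simpa [mem_ball_zero_iff] using hz0
  have hint := hcl.circleIntegral_sub_inv_smul hmem
  rw [cint, hint, upd_self, inv_smul_smul₀]
  exact two_pi_I_ne_zero

/-- Step B : the integral does not depend on the radius. -/
lemma cint_congr (hf : DifferentiableOn ℂ f {z : Ec n | r < ‖z‖}) (hr : 0 < r)
    {R₁ R₂ : ℝ} (h1 : r < R₁) (h12 : R₁ ≤ R₂) {z : Ec n} (hz0 : ‖z 0‖ < R₁) :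
    cint f R₂ z = cint f R₁ z := by
  have key : ∀ w : ℂ, w ∈ closedBall (0 : ℂ) R₂ \ ball (0 : ℂ) R₁ →
      DifferentiableAt ℂ (fun w => (w - z 0)⁻¹ • f (upd z w)) w := by
    intro w hw
    have hAw : R₁ ≤ ‖w‖ := by
      simpa [mem_ball_zero_iff, not_lt] using hw.2
    have hwr : r < ‖w‖ := lt_of_lt_of_le h1 hAw
    have hzw : w - z 0 ≠ 0 := by
      intro h
      rw [sub_eq_zero] at h
      exact absurd (h ▸ hAw) (not_le.2 hz0)
    have hmem : upd z w ∈ {z : Ec n | r < ‖z‖} := upd_mem_S hwr z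
    exact ((differentiableAt_fun_id.sub_const (z 0)).inv hzw).smul
      ((hf.differentiableAt ((isOpen_S r).mem_nhds hmem)).comp w (diffAt_upd_w z w))
  unfold cint
  congr 1
  refine circleIntegral_eq_of_differentiable_on_annulus_off_countable (hr.trans h1) h12
    countable_empty (fun w hw => (key w hw).continuousAt.continuousWithinAt) ?_
  intro w hw
  exact key w ⟨ball_subset_closedBall hw.1.1, fun h => hw.1.2 (ball_subset_closedBall h)⟩

end HartogsBall
namespace HartogsBall
variable {n : ℕ} [NeZero n] {r : ℝ} {f : Ec n → ℂ}

lemma norm_proj_le : ‖(EuclideanSpace.proj (0 : Fin n) : Ec n →L[ℂ] ℂ)‖ ≤ 1 :=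
  ContinuousLinearMap.opNorm_le_bound _ zero_le_one fun x => by
    simpa using norm_coord_le x 0

lemma norm_D_le {w : ℂ} {z : Ec n} {Mf Md ε : ℝ} (hε : 0 < ε)
    (hMf : ‖f (upd z w)‖ ≤ Mf) (hMd : ‖fderiv ℂ f (upd z w)‖ ≤ Md)
    (hsep : ε ≤ ‖w - z 0‖) :
    ‖D f w z‖ ≤ ε⁻¹ * (Md * ‖Lmap n‖) + (ε ^ 2)⁻¹ * Mf := by
  have hMf0 : 0 ≤ Mf := le_trans (norm_nonneg _) hMf
  have hMd0 : 0 ≤ Md := le_trans (norm_nonneg _) hMd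
  have hwz : (0:ℝ) < ‖w - z 0‖ := lt_of_lt_of_le hε hsep
  refine le_trans (norm_add_le _ _) (add_le_add ?_ ?_)
  · refine le_trans (ContinuousLinearMap.opNorm_smul_le _ _) ?_
    rw [norm_inv]
    refine mul_le_mul ?_ ?_ (norm_nonneg _) (by positivity)
    · exact inv_anti₀ hε hsep
    · exact le_trans (ContinuousLinearMap.opNorm_comp_le _ _)
        (mul_le_mul_of_nonneg_right hMd (norm_nonneg _))
  · rw [ContinuousLinearMap.norm_smulRight_apply]
    refine mul_le_mul ?_ hMf (norm_nonneg _) (by positivity)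
    refine le_trans (ContinuousLinearMap.opNorm_comp_le _ _) ?_
    have h1 : ‖(1 : ℂ →L[ℂ] ℂ).smulRight (-(((w - z 0) ^ 2)⁻¹))‖ = (‖w - z 0‖ ^ 2)⁻¹ := by
      rw [ContinuousLinearMap.norm_smulRight_apply, ContinuousLinearMap.one_def,
        ContinuousLinearMap.norm_id, one_mul, norm_neg, norm_inv, norm_pow]
    rw [h1, norm_neg]
    calc (‖w - z 0‖ ^ 2)⁻¹ * ‖(EuclideanSpace.proj (0 : Fin n) : Ec n →L[ℂ] ℂ)‖
        ≤ (‖w - z 0‖ ^ 2)⁻¹ * 1 := by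
          exact mul_le_mul_of_nonneg_left norm_proj_le (by positivity)
      _ = (‖w - z 0‖ ^ 2)⁻¹ := mul_one _
      _ ≤ (ε ^ 2)⁻¹ := by
          apply inv_anti₀ (by positivity)
          exact pow_le_pow_left₀ hε.le hsep 2

end HartogsBall

namespace HartogsBall
variable {n : ℕ} [NeZero n] {r : ℝ} {f : Ec n → ℂ}

/-- A Cauchy estimate for the Fréchet derivative of a holomorphic function. -/
lemma norm_fderiv_le_of_ball (hf : DifferentiableOn ℂ f {z : Ec n | r < ‖z‖})
    {δ M : ℝ} (hδ : 0 < δ) {y : Ec n} (hy : closedBall y δ ⊆ {z : Ec n | r < ‖z‖})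
    (hM : ∀ x ∈ closedBall y δ, ‖f x‖ ≤ M) : ‖fderiv ℂ f y‖ ≤ M / δ := by
  have hM0 : 0 ≤ M := le_trans (norm_nonneg _) (hM y (mem_closedBall_self hδ.le))
  refine ContinuousLinearMap.opNorm_le_bound _ (by positivity) fun v => ?_
  rcases eq_or_ne v 0 with rfl | hv
  · simp
  have hv0 : (0:ℝ) < ‖v‖ := norm_pos_iff.2 hv
  set ρ : ℝ := δ / ‖v‖ with hρdef
  have hρ : 0 < ρ := by positivity
  set g : ℂ → ℂ := fun t => f (y + t • v) with hg
  have hmem : ∀ t : ℂ, t ∈ closedBall (0:ℂ) ρ → y + t • v ∈ closedBall y δ := by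
    intro t ht
    rw [mem_closedBall_iff_norm]
    rw [mem_closedBall_zero_iff] at ht
    calc ‖y + t • v - y‖ = ‖t‖ * ‖v‖ := by rw [add_sub_cancel_left, norm_smul]
      _ ≤ ρ * ‖v‖ := by gcongr
      _ = δ := by rw [hρdef, div_mul_cancel₀ δ hv0.ne']
  have hdiffg : ∀ t ∈ closedBall (0:ℂ) ρ, DifferentiableAt ℂ g t := by
    intro t ht
    have h1 : DifferentiableAt ℂ f (y + t • v) :=
      hf.differentiableAt ((isOpen_S r).mem_nhds (hy (hmem t ht)))
    exact h1.comp t ((differentiableAt_id.smul_const v).const_add y)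
  have hdc : DiffContOnCl ℂ g (ball (0:ℂ) ρ) := by
    apply DifferentiableOn.diffContOnCl
    rw [closure_ball (0:ℂ) hρ.ne']
    exact fun t ht => (hdiffg t ht).differentiableWithinAt
  have hderiv : HasDerivAt g (fderiv ℂ f y v) 0 := by
    have h1 : HasFDerivAt f (fderiv ℂ f y) y :=
      (hf.differentiableAt ((isOpen_S r).mem_nhds
        (hy (mem_closedBall_self hδ.le)))).hasFDerivAt
    have h2 : HasDerivAt (fun t : ℂ => y + t • v) v 0 := by
      simpa using ((hasDerivAt_id (0:ℂ)).smul_const v).const_add y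
    have h1' : HasFDerivAt f (fderiv ℂ f y) ((0 : ℂ) • v + y) := by simpa using h1
    have h2' : HasDerivAt (fun t : ℂ => t • v + y) v 0 := by
      simpa using (hasDerivAt_id (0:ℂ)).smul_const v |>.add_const y
    have h3 := h1'.comp_hasDerivAt (0 : ℂ) h2'
    have h4 : f ∘ (fun t : ℂ => t • v + y) = g := by
      funext t; simp [hg, Function.comp, add_comm]
    rwa [h4] at h3
  have hbound := Complex.norm_deriv_le_of_forall_mem_sphere_norm_le hρ hdc
    (fun t ht => hM _ (hmem t (sphere_subset_closedBall ht)))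
  rw [hderiv.deriv] at hbound
  calc ‖fderiv ℂ f y v‖ ≤ M / ρ := hbound
    _ = M / δ * ‖v‖ := by rw [hρdef]; field_simp

/-- Step C : differentiability of the Cauchy integral. -/
lemma cint_diff (hf : DifferentiableOn ℂ f {z : Ec n | r < ‖z‖}) (hr : 0 < r)
    {R : ℝ} (hR : r < R) {z₀ : Ec n} (hz₀ : ‖z₀ 0‖ < R) :
    DifferentiableAt ℂ (cint f R) z₀ := by
  classical
  have hR0 : 0 < R := hr.trans hR
  set ε : ℝ := (R - ‖z₀ 0‖) / 2 with hεdef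
  have hε : 0 < ε := by
    have : 0 < R - ‖z₀ 0‖ := sub_pos.2 hz₀
    positivity
  -- coordinate Lipschitz bound
  have hcoord : ∀ z : Ec n, dist z z₀ ≤ ε → ‖z 0‖ ≤ ‖z₀ 0‖ + ε := by
    intro z hz
    have h1 : ‖z 0 - z₀ 0‖ ≤ ε := by
      have h2 := norm_coord_le (z - z₀) 0
      rw [PiLp.sub_apply] at h2
      exact le_trans h2 (by rwa [← dist_eq_norm])
    calc ‖z 0‖ ≤ ‖z₀ 0‖ + ‖z 0 - z₀ 0‖ := norm_le_insert' _ _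
      _ ≤ ‖z₀ 0‖ + ε := by linarith
  have hsep : ∀ w : ℂ, ‖w‖ = R → ∀ z : Ec n, dist z z₀ ≤ ε → ε ≤ ‖w - z 0‖ := by
    intro w hw z hz
    have h1 : ‖z 0‖ ≤ ‖z₀ 0‖ + ε := hcoord z hz
    have h2 : ‖w‖ - ‖z 0‖ ≤ ‖w - z 0‖ := norm_sub_norm_le _ _
    have : R - (‖z₀ 0‖ + ε) = ε := by rw [hεdef]; ring
    linarith
  -- the compact set of relevant points, and bounds on `f` and its derivative
  set K : Set (Ec n) :=
    (fun p : Ec n × ℂ => upd p.1 p.2) '' (closedBall z₀ ε ×ˢ sphere (0 : ℂ) R) with hKdef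
  have hK_comp : IsCompact K :=
    ((isCompact_closedBall _ _).prod (isCompact_sphere _ _)).image continuous_upd
  have hK_sub : K ⊆ {z : Ec n | r < ‖z‖} := by
    rintro - ⟨⟨z, w⟩, ⟨-, hw⟩, rfl⟩
    rw [mem_sphere_zero_iff_norm] at hw
    exact lt_of_lt_of_le (hw ▸ hR) (norm_le_norm_upd z w)
  have hmemK : ∀ (z : Ec n), dist z z₀ ≤ ε → ∀ w : ℂ, ‖w‖ = R → upd z w ∈ K := by
    intro z hz w hw
    exact ⟨(z, w), ⟨mem_closedBall.2 hz, mem_sphere_zero_iff_norm.2 hw⟩, rfl⟩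
  have hK_norm : ∀ y ∈ K, R ≤ ‖y‖ := by
    rintro - ⟨⟨z, w⟩, ⟨-, hw⟩, rfl⟩
    rw [mem_sphere_zero_iff_norm] at hw
    exact hw ▸ norm_le_norm_upd z w
  obtain ⟨Mf, hMf⟩ := hK_comp.exists_bound_of_continuousOn (hf.continuousOn.mono hK_sub)
  -- enlarged compact set and a bound for the derivative of `f` via the Cauchy estimate
  set δ : ℝ := (R - r) / 2 with hδdef
  have hδ : 0 < δ := by
    have : 0 < R - r := sub_pos.2 hR
    positivity
  set K₂ : Set (Ec n) := (fun p : Ec n × Ec n => p.1 + p.2) '' (K ×ˢ closedBall 0 δ) with hK₂def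
  have hK₂_comp : IsCompact K₂ :=
    (hK_comp.prod (isCompact_closedBall _ _)).image (continuous_fst.add continuous_snd)
  have hK₂_sub : K₂ ⊆ {z : Ec n | r < ‖z‖} := by
    rintro - ⟨⟨y, u⟩, ⟨hy, hu⟩, rfl⟩
    rw [mem_closedBall_zero_iff] at hu
    have h1 : R ≤ ‖y‖ := hK_norm y hy
    have h2 : ‖y‖ - ‖u‖ ≤ ‖y + u‖ := by
      calc ‖y‖ - ‖u‖ ≤ ‖y‖ - ‖-u‖ := by rw [norm_neg]
        _ ≤ ‖y - -u‖ := norm_sub_norm_le _ _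
        _ = ‖y + u‖ := by rw [sub_neg_eq_add]
    have : r < R - δ := by rw [hδdef]; linarith
    simp only [mem_setOf_eq]
    linarith
  obtain ⟨M₂, hM₂⟩ := hK₂_comp.exists_bound_of_continuousOn (hf.continuousOn.mono hK₂_sub)
  have hball_sub : ∀ y ∈ K, closedBall y δ ⊆ K₂ := by
    intro y hy x hx
    exact ⟨(y, x - y), ⟨hy, by simpa [mem_closedBall_zero_iff, ← dist_eq_norm', dist_comm] using hx⟩,
      by simp⟩
  set Md : ℝ := M₂ / δ with hMddef
  have hMd : ∀ y ∈ K, ‖fderiv ℂ f y‖ ≤ Md := fun y hy =>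
    norm_fderiv_le_of_ball hf hδ ((hball_sub y hy).trans hK₂_sub)
      (fun x hx => hM₂ x (hball_sub y hy hx))
  -- nonvanishing of the denominator for `z` near `z₀`
  have hne : ∀ (z : Ec n), dist z z₀ ≤ ε → ∀ θ : ℝ, circleMap 0 R θ - z 0 ≠ 0 := by
    intro z hz θ
    have := hsep (circleMap 0 R θ) (by simp [norm_circleMap_zero,
      abs_of_pos hR0]) z hz
    intro h
    rw [h, norm_zero] at this
    exact absurd this (not_le.2 hε)
  -- membership of the slice in the domain
  have hmemS : ∀ (z : Ec n) (θ : ℝ), upd z (circleMap 0 R θ) ∈ {z : Ec n | r < ‖z‖} := by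
    intro z θ
    apply upd_mem_S _ z
    simp [norm_circleMap_zero, abs_of_pos hR0, hR]
  -- continuity in `θ` of all ingredients
  have hcm : Continuous (circleMap (0 : ℂ) R) := continuous_circleMap 0 R
  have hupd_cont : ∀ z : Ec n, Continuous (fun θ : ℝ => upd z (circleMap 0 R θ)) := fun z =>
    continuous_upd.comp (continuous_const.prodMk hcm)
  have hfc : ∀ z : Ec n, Continuous (fun θ : ℝ => f (upd z (circleMap 0 R θ))) := fun z =>
    hf.continuousOn.comp_continuous (hupd_cont z) (fun θ => hmemS z θ)
  have hG : ∀ (z : Ec n), dist z z₀ ≤ ε → Continuous (fun θ : ℝ =>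
      (circleMap 0 R θ * I) • ((circleMap 0 R θ - z 0)⁻¹ • f (upd z (circleMap 0 R θ)))) := by
    intro z hz
    exact ((hcm.mul continuous_const).smul
      (((hcm.sub continuous_const).inv₀ (hne z hz)).smul (hfc z)))
  -- measurability of the candidate derivative at `z₀`
  have hF'meas : MeasureTheory.AEStronglyMeasurable
      (fun θ : ℝ => (circleMap 0 R θ * I) • D f (circleMap 0 R θ) z₀)
      (MeasureTheory.volume.restrict (Set.uIoc (0:ℝ) (2 * Real.pi))) := by
    have m1 : Measurable (fun θ : ℝ => fderiv ℂ f (upd z₀ (circleMap 0 R θ))) :=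
      (measurable_fderiv ℂ f).comp (hupd_cont z₀).measurable
    have sm1 : MeasureTheory.StronglyMeasurable
        (fun θ : ℝ => fderiv ℂ f (upd z₀ (circleMap 0 R θ))) := m1.stronglyMeasurable
    have sm2 : MeasureTheory.StronglyMeasurable
        (fun θ : ℝ => (fderiv ℂ f (upd z₀ (circleMap 0 R θ))).comp (Lmap n)) := by
      have hcont : Continuous (fun A : Ec n →L[ℂ] ℂ => A.comp (Lmap n)) :=
        ((ContinuousLinearMap.compL ℂ (Ec n) (Ec n) ℂ).flip (Lmap n)).continuous
      exact hcont.comp_stronglyMeasurable sm1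
    have sm3 : MeasureTheory.StronglyMeasurable
        (fun θ : ℝ => (circleMap 0 R θ - z₀ 0)⁻¹ •
          (fderiv ℂ f (upd z₀ (circleMap 0 R θ))).comp (Lmap n)) :=
      (((hcm.sub continuous_const).inv₀
        (hne z₀ (by simp [hε.le]) )).stronglyMeasurable).smul sm2
    have hbil2 : Continuous (fun p : (Ec n →L[ℂ] ℂ) × ℂ => p.1.smulRight p.2) :=
      isBoundedBilinearMap_smulRight.continuous
    have hbil1 : Continuous (fun p : (ℂ →L[ℂ] ℂ) × ℂ => p.1.smulRight p.2) :=
      isBoundedBilinearMap_smulRight.continuous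
    have hs : Continuous (fun θ : ℝ => -(((circleMap 0 R θ - z₀ 0) ^ 2)⁻¹)) :=
      (((hcm.sub continuous_const).pow 2).inv₀
        (fun θ => pow_ne_zero 2 (hne z₀ (by simp [hε.le]) θ))).neg
    have c4a : Continuous (fun θ : ℝ =>
        (1 : ℂ →L[ℂ] ℂ).smulRight (-(((circleMap 0 R θ - z₀ 0) ^ 2)⁻¹))) :=
      hbil1.comp (continuous_const.prodMk hs)
    have c4b : Continuous (fun θ : ℝ =>
        ((1 : ℂ →L[ℂ] ℂ).smulRight (-(((circleMap 0 R θ - z₀ 0) ^ 2)⁻¹))).comp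
          (-(EuclideanSpace.proj 0 : Ec n →L[ℂ] ℂ))) :=
      c4a.clm_comp continuous_const
    have c4 : Continuous (fun θ : ℝ =>
        ((((1 : ℂ →L[ℂ] ℂ).smulRight (-(((circleMap 0 R θ - z₀ 0) ^ 2)⁻¹))).comp
          (-(EuclideanSpace.proj 0 : Ec n →L[ℂ] ℂ))).smulRight
            (f (upd z₀ (circleMap 0 R θ))))) :=
      hbil2.comp (c4b.prodMk (hfc z₀))
    have sm5 : MeasureTheory.StronglyMeasurable
        (fun θ : ℝ => D f (circleMap 0 R θ) z₀) := by
      unfold D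
      exact sm3.add c4.stronglyMeasurable
    exact (((hcm.mul continuous_const).stronglyMeasurable).smul sm5).aestronglyMeasurable
  -- the parametric interval integral
  have key := intervalIntegral.hasFDerivAt_integral_of_dominated_of_fderiv_le
    (𝕜 := ℂ) (μ := MeasureTheory.volume) (a := 0) (b := 2 * Real.pi)
    (F := fun (z : Ec n) (θ : ℝ) =>
      (circleMap 0 R θ * I) • ((circleMap 0 R θ - z 0)⁻¹ • f (upd z (circleMap 0 R θ))))
    (F' := fun (z : Ec n) (θ : ℝ) => (circleMap 0 R θ * I) • D f (circleMap 0 R θ) z)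
    (x₀ := z₀)
    (bound := fun _ => R * (ε⁻¹ * (Md * ‖Lmap n‖) + (ε ^ 2)⁻¹ * Mf)) (ball_mem_nhds z₀ hε)
    ?_ ?_ ?_ ?_ ?_ ?_
  · exact ((key.const_smul ((2 * Real.pi * I : ℂ))⁻¹).differentiableAt).congr_of_eventuallyEq
      (by
        filter_upwards with z
        simp only [cint, circleIntegral, deriv_circleMap, Pi.smul_apply])
  · filter_upwards [ball_mem_nhds z₀ hε] with z hz
    exact (hG z (le_of_lt (mem_ball.1 hz))).aestronglyMeasurable
  · exact (hG z₀ (by simp [hε.le])).intervalIntegrable _ _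
  · exact hF'meas
  · refine MeasureTheory.ae_of_all _ fun θ _ z hz => ?_
    have hzd : dist z z₀ ≤ ε := le_of_lt (mem_ball.1 hz)
    have habs : ‖circleMap 0 R θ‖ = R := by
      simp [norm_circleMap_zero, abs_of_pos hR0]
    have hDb : ‖D f (circleMap 0 R θ) z‖ ≤ ε⁻¹ * (Md * ‖Lmap n‖) + (ε ^ 2)⁻¹ * Mf :=
      norm_D_le hε (hMf _ (hmemK z hzd _ habs)) (hMd _ (hmemK z hzd _ habs))
        (hsep _ habs z hzd)
    calc ‖(circleMap 0 R θ * I) • D f (circleMap 0 R θ) z‖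
        ≤ ‖circleMap 0 R θ * I‖ * ‖D f (circleMap 0 R θ) z‖ :=
          ContinuousLinearMap.opNorm_smul_le _ _
      _ ≤ R * (ε⁻¹ * (Md * ‖Lmap n‖) + (ε ^ 2)⁻¹ * Mf) := by
          rw [norm_mul, Complex.norm_I, mul_one, habs]
          exact mul_le_mul_of_nonneg_left hDb hR0.le
  · exact intervalIntegrable_const
  · refine MeasureTheory.ae_of_all _ fun θ _ z hz => ?_
    have hzd : dist z z₀ ≤ ε := le_of_lt (mem_ball.1 hz)
    have hw : r < ‖circleMap 0 R θ‖ := by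
      simp [norm_circleMap_zero, abs_of_pos hR0, hR]
    have hzw : z 0 ≠ circleMap 0 R θ := by
      intro h
      exact hne z hzd θ (by rw [← h, sub_self])
    exact (hasFDerivAt_integrand hf hw hzw).const_smul (circleMap 0 R θ * I)

end HartogsBall

namespace HartogsBall
variable {n : ℕ} [NeZero n] {r : ℝ} {f : Ec n → ℂ}

/-- The global extension. -/
def Fext (f : Ec n → ℂ) (r : ℝ) (z : Ec n) : ℂ := cint f (max r ‖z 0‖ + 1) z

lemma Fext_eventuallyEq (hf : DifferentiableOn ℂ f {z : Ec n | r < ‖z‖}) (hr : 0 < r)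
    (z₀ : Ec n) : Fext f r =ᶠ[𝓝 z₀] cint f (max r ‖z₀ 0‖ + 2) := by
  have hc : Continuous (fun z : Ec n => z 0) :=
    (EuclideanSpace.proj (0 : Fin n) : Ec n →L[ℂ] ℂ).continuous
  have hopen : IsOpen {z : Ec n | ‖z 0 - z₀ 0‖ < 1} :=
    isOpen_lt ((hc.sub continuous_const).norm) continuous_const
  filter_upwards [hopen.mem_nhds (by simp)] with z hz
  have hz' : ‖z 0 - z₀ 0‖ < 1 := hz
  have hz0' : ‖z 0‖ < ‖z₀ 0‖ + 1 := by
    calc ‖z 0‖ ≤ ‖z₀ 0‖ + ‖z 0 - z₀ 0‖ := norm_le_insert' _ _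
      _ < ‖z₀ 0‖ + 1 := by linarith
  set m : ℝ := min (max r ‖z 0‖ + 1) (max r ‖z₀ 0‖ + 2) with hm
  have hrm : r < m :=
    lt_min (lt_of_le_of_lt (le_max_left _ _) (lt_add_one _))
      (lt_of_le_of_lt (le_max_left _ _) (by linarith))
  have hzm : ‖z 0‖ < m := by
    refine lt_min (lt_of_le_of_lt (le_max_right _ _) (lt_add_one _)) ?_
    have : ‖z₀ 0‖ + 1 ≤ max r ‖z₀ 0‖ + 2 := by
      have := le_max_right r ‖z₀ 0‖; linarith
    linarith
  have e1 := cint_congr hf hr hrm (min_le_left _ _) hzm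
  have e2 := cint_congr hf hr hrm (min_le_right _ _) hzm
  show Fext f r z = cint f (max r ‖z₀ 0‖ + 2) z
  rw [Fext, e1, ← e2]

lemma Fext_diff (hf : DifferentiableOn ℂ f {z : Ec n | r < ‖z‖}) (hr : 0 < r) :
    Differentiable ℂ (Fext f r) := by
  intro z₀
  have h1 : r < max r ‖z₀ 0‖ + 2 := lt_of_le_of_lt (le_max_left _ _) (by linarith)
  have h2 : ‖z₀ 0‖ < max r ‖z₀ 0‖ + 2 := lt_of_le_of_lt (le_max_right _ _) (by linarith)
  exact (cint_diff hf hr h1 h2).congr_of_eventuallyEq (Fext_eventuallyEq hf hr z₀)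

lemma Fext_eq_on_U (hf : DifferentiableOn ℂ f {z : Ec n | r < ‖z‖}) (hr : 0 < r)
    {z : Ec n} (hz : r < ‖upd z 0‖) : Fext f r z = f z :=
  cint_eq hf hz (lt_of_le_of_lt (le_max_right _ _) (lt_add_one _))

lemma Fext_eq_on_V (hn : 2 ≤ n) (hf : DifferentiableOn ℂ f {z : Ec n | r < ‖z‖}) (hr : 0 < r)
    {z : Ec n} (hz : r < ‖z 0‖) : Fext f r z = f z := by
  set j : Fin n := ⟨1, by omega⟩ with hj
  have hj0 : (0 : Fin n) ≠ j := by
    simp [hj, Fin.ext_iff]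
  set L : ℂ → Ec n := fun t => z + t • EuclideanSpace.single j 1 with hL
  have hL0 : ∀ t, (L t) 0 = z 0 := by
    intro t
    simp [hL, PiLp.add_apply, PiLp.smul_apply, EuclideanSpace.single_apply, hj0]
  have hLj : ∀ t, (L t) j = z j + t := by
    intro t
    simp [hL, PiLp.add_apply, PiLp.smul_apply, EuclideanSpace.single_apply]
  have hLd : Differentiable ℂ L := (differentiable_id.smul_const _).const_add z
  have hmem : ∀ t, L t ∈ {z : Ec n | r < ‖z‖} := fun t =>
    lt_of_lt_of_le (hL0 t ▸ hz) (norm_coord_le (L t) 0)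
  set φ : ℂ → ℂ := fun t => Fext f r (L t) - f (L t) with hφ
  have hφd : Differentiable ℂ φ := by
    apply Differentiable.sub
    · exact (Fext_diff hf hr).comp hLd
    · intro t
      exact (hf.differentiableAt ((isOpen_S r).mem_nhds (hmem t))).comp t (hLd t)
  have hzero : ∀ t : ℂ, r + ‖z j‖ < ‖t‖ → φ t = 0 := by
    intro t ht
    have h1 : r < ‖upd (L t) 0‖ := by
      have h2 : ‖(upd (L t) 0) j‖ ≤ ‖upd (L t) 0‖ := norm_coord_le _ j
      have h3 : (upd (L t) 0) j = (L t) j := by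
        rw [upd_apply, if_neg hj0.symm]
      have h4 : ‖t‖ - ‖z j‖ ≤ ‖z j + t‖ := by
        calc ‖t‖ - ‖z j‖ = ‖t‖ - ‖-(z j)‖ := by rw [norm_neg]
          _ ≤ ‖t - -(z j)‖ := norm_sub_norm_le _ _
          _ = ‖z j + t‖ := by rw [sub_neg_eq_add, add_comm]
      rw [h3, hLj t] at h2
      linarith
    simp only [hφ, Fext_eq_on_U hf hr h1, sub_self]
  have hφan : AnalyticOnNhd ℂ φ univ := fun t _ => hφd.analyticAt t
  have h0an : AnalyticOnNhd ℂ (fun _ : ℂ => (0 : ℂ)) univ := fun t _ => analyticAt_const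
  set t₀ : ℂ := ((r + ‖z j‖ + 1 : ℝ) : ℂ) with ht₀
  have ht₀n : ‖t₀‖ = r + ‖z j‖ + 1 := by
    rw [ht₀, Complex.norm_real, Real.norm_eq_abs, abs_of_pos (by positivity)]
  have hev : φ =ᶠ[𝓝 t₀] fun _ => 0 := by
    filter_upwards [Metric.ball_mem_nhds t₀ one_pos] with t ht
    apply hzero
    have h5 : ‖t - t₀‖ < 1 := by rwa [mem_ball, dist_eq_norm] at ht
    have h6 : ‖t₀‖ - ‖t₀ - t‖ ≤ ‖t‖ := by
      have := norm_sub_norm_le t₀ (t₀ - t)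
      simpa using this
    rw [ht₀n] at h6
    rw [show t₀ - t = -(t - t₀) by ring, norm_neg] at h6
    linarith
  have heq := hφan.eqOn_of_preconnected_of_eventuallyEq h0an isPreconnected_univ
    (mem_univ t₀) hev
  have hφ0 : Fext f r (L 0) - f (L 0) = 0 := heq (mem_univ 0)
  have hL0' : L 0 = z := by simp [hL]
  rw [hL0'] at hφ0
  exact sub_eq_zero.1 hφ0

lemma Fext_eq (hn : 2 ≤ n) (hf : DifferentiableOn ℂ f {z : Ec n | r < ‖z‖}) (hr : 0 < r)
    {z : Ec n} (hz : r < ‖z‖) : Fext f r z = f z := by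
  rcases eq_or_ne (z 0) 0 with h0 | h0
  · apply Fext_eq_on_U hf hr
    have hzz : upd z 0 = z := by rw [← h0, upd_self]
    rwa [hzz]
  · have hzn : 0 < ‖z‖ := hr.trans hz
    have hz0 : 0 < ‖z 0‖ := norm_pos_iff.2 h0
    set Ω : Set ℂ := {s : ℂ | r / ‖z‖ < ‖s‖} with hΩ
    have hΩopen : IsOpen Ω := isOpen_lt continuous_const continuous_norm
    set ψ : ℂ → ℂ := fun s => Fext f r (s • z) - f (s • z) with hψ
    have hsmul : ∀ s : ℂ, ‖(s • z) 0‖ = ‖s‖ * ‖z 0‖ := by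
      intro s
      rw [PiLp.smul_apply, smul_eq_mul, norm_mul]
    have hψd : DifferentiableOn ℂ ψ Ω := by
      intro s hs
      apply DifferentiableAt.differentiableWithinAt
      have hs' : r / ‖z‖ < ‖s‖ := hs
      rw [div_lt_iff₀ hzn] at hs'
      have hsz : r < ‖s • z‖ := by
        rw [norm_smul]; linarith
      exact (((Fext_diff hf hr) (s • z)).comp s (differentiableAt_id.smul_const z)).sub
        ((hf.differentiableAt ((isOpen_S r).mem_nhds hsz)).comp s
          (differentiableAt_id.smul_const z))
    have hψan : AnalyticOnNhd ℂ ψ Ω := hψd.analyticOnNhd hΩopen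
    have h0an : AnalyticOnNhd ℂ (fun _ : ℂ => (0 : ℂ)) Ω := fun t _ => analyticAt_const
    have hpre : IsPreconnected Ω :=
      isPreconnected_norm_gt (by
        rw [← Module.finrank_eq_rank, Complex.finrank_real_complex]
        exact_mod_cast one_lt_two) (div_pos hr hzn)
    set s₀ : ℂ := ((r / ‖z 0‖ + 1 : ℝ) : ℂ) with hs₀
    have hs₀n : ‖s₀‖ = r / ‖z 0‖ + 1 := by
      rw [hs₀, Complex.norm_real, Real.norm_eq_abs, abs_of_pos (by positivity)]
    have hle : r / ‖z‖ ≤ r / ‖z 0‖ :=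
      div_le_div_of_nonneg_left hr.le hz0 (norm_coord_le z 0)
    have hs₀Ω : s₀ ∈ Ω := by
      show r / ‖z‖ < ‖s₀‖
      rw [hs₀n]; linarith
    have hev : ψ =ᶠ[𝓝 s₀] fun _ => 0 := by
      have hU : IsOpen {s : ℂ | r / ‖z 0‖ < ‖s‖} := isOpen_lt continuous_const continuous_norm
      have hs₀U : s₀ ∈ {s : ℂ | r / ‖z 0‖ < ‖s‖} := by
        show r / ‖z 0‖ < ‖s₀‖
        rw [hs₀n]; linarith
      filter_upwards [hU.mem_nhds hs₀U] with s hs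
      have h7 : r < ‖(s • z) 0‖ := by
        have hs' : r / ‖z 0‖ < ‖s‖ := hs
        rw [div_lt_iff₀ hz0] at hs'
        rw [hsmul s]; linarith
      simp only [hψ, Fext_eq_on_V hn hf hr h7, sub_self]
    have heq := hψan.eqOn_of_preconnected_of_eventuallyEq h0an hpre hs₀Ω hev
    have h1Ω : (1 : ℂ) ∈ Ω := by
      show r / ‖z‖ < ‖(1:ℂ)‖
      rw [norm_one, div_lt_one hzn]
      exact hz
    have hψ1 : Fext f r ((1:ℂ) • z) - f ((1:ℂ) • z) = 0 := heq h1Ω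
    rw [one_smul] at hψ1
    exact sub_eq_zero.1 hψ1

end HartogsBall

end

/-- Hartogs extension from the complement of a closed round ball: for `n ≥ 2`,
every function holomorphic on `{z ∈ ℂⁿ : ‖z‖ > r}` is the restriction of an
entire function. -/
theorem extension_from_complement_of_ball (n : ℕ) (hn : 2 ≤ n) (r : ℝ) (hr : 0 < r)
    (f : EuclideanSpace ℂ (Fin n) → ℂ)
    (hf : DifferentiableOn ℂ f {z : EuclideanSpace ℂ (Fin n) | r < ‖z‖}) :
    ∃ F : EuclideanSpace ℂ (Fin n) → ℂ, Differentiable ℂ F ∧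
      ∀ z : EuclideanSpace ℂ (Fin n), r < ‖z‖ → F z = f z := by
  haveI : NeZero n := ⟨by omega⟩
  exact ⟨HartogsBall.Fext f r, HartogsBall.Fext_diff hf hr,
    fun z hz => HartogsBall.Fext_eq hn hf hr hz⟩
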